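/- Let d ∈ ℕ, α > 0, σ > 0, let μ be a probability measure on ℝ^d, and let X₁, X₂, … be i.i.d. random vectors with law μ. Fix x ∈ ℝ^d, write φ_σ(u) = (2πσ²)^{−d/2} exp(−‖u‖²/(2σ²)), and fix ε with 0 < ε < E[φ_σ(x − α X₁)]. Then, almost surely, (1/σ²) · ( −x + α · ( ∑_{i=1}^m φ_σ(x − α X_i) X_i ) / max( ∑_{i=1}^m φ_σ(x − α X_i), m ε ) ) converges as m → ∞ to ∇ log p(x), where p(x) = ∫_{ℝ^d} φ_σ(x − α y) dμ(y). In particular, the thresholded ratio estimator of the score is strongly consistent. -/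

import Mathlib

open MeasureTheory ProbabilityTheory Real Filter Topology

/-- The centered Gaussian density with scale `σ` on `ℝ^d`:
`φ_σ(x) = (2πσ²)^{−d/2} exp(−‖x‖²/(2σ²))`. -/
noncomputable def gaussDensity (d : ℕ) (σ : ℝ) (x : EuclideanSpace ℝ (Fin d)) : ℝ :=
  (2 * π * σ ^ 2) ^ (-(d : ℝ) / 2) * Real.exp (-‖x‖ ^ 2 / (2 * σ ^ 2))


set_option maxHeartbeats 1000000
set_option synthInstance.maxHeartbeats 400000

variable {d : ℕ} {σ : ℝ}

lemma gauss_nonneg (u : EuclideanSpace ℝ (Fin d)) : 0 ≤ gaussDensity d σ u := by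
  unfold gaussDensity; positivity

lemma gauss_le (hσ : 0 < σ) (u : EuclideanSpace ℝ (Fin d)) :
    gaussDensity d σ u ≤ (2 * π * σ ^ 2) ^ (-(d : ℝ) / 2) := by
  unfold gaussDensity
  have h1 : Real.exp (-‖u‖ ^ 2 / (2 * σ ^ 2)) ≤ 1 := by
    rw [Real.exp_le_one_iff]
    have h2 : 0 < σ^2 := by positivity
    apply div_nonpos_of_nonpos_of_nonneg <;> nlinarith [sq_nonneg ‖u‖]
  calc (2 * π * σ ^ 2) ^ (-(d:ℝ) / 2) * Real.exp (-‖u‖ ^ 2 / (2 * σ ^ 2))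
      ≤ (2 * π * σ ^ 2) ^ (-(d:ℝ) / 2) * 1 := by
        apply mul_le_mul_of_nonneg_left h1; positivity
    _ = _ := mul_one _

lemma gauss_mul_norm_le (hσ : 0 < σ) (u : EuclideanSpace ℝ (Fin d)) :
    gaussDensity d σ u * ‖u‖ ≤ (2 * π * σ ^ 2) ^ (-(d : ℝ) / 2) * σ := by
  unfold gaussDensity
  rw [mul_assoc]
  have hB : (0:ℝ) ≤ (2 * π * σ ^ 2) ^ (-(d : ℝ) / 2) := by positivity
  refine mul_le_mul_of_nonneg_left ?_ hB
  -- exp (-‖u‖²/(2σ²)) * ‖u‖ ≤ σ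
  set t := ‖u‖ with ht
  have ht0 : 0 ≤ t := norm_nonneg _
  have key : t ≤ σ * Real.exp (t ^ 2 / (2 * σ ^ 2)) := by
    have h1 : 1 + t ^ 2 / (2 * σ ^ 2) ≤ Real.exp (t ^ 2 / (2 * σ ^ 2)) := by
      have := Real.add_one_le_exp (t ^ 2 / (2 * σ ^ 2)); linarith
    have h2 : t ≤ σ * (1 + t ^ 2 / (2 * σ ^ 2)) := by
      rw [mul_add, mul_one]
      have hσ2 : 0 < σ^2 := by positivity
      have : σ * (t ^ 2 / (2 * σ ^ 2)) = t^2/(2*σ) := by field_simp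
      rw [this]
      have hσ0 : 0 < 2*σ := by linarith
      rw [← sub_nonneg]
      have heq : σ + t^2/(2*σ) - t = ((t-σ)^2 + σ^2)/(2*σ) := by field_simp; ring
      rw [heq]
      positivity
    calc t ≤ σ * (1 + t ^ 2 / (2 * σ ^ 2)) := h2
    _ ≤ σ * Real.exp (t ^ 2 / (2 * σ ^ 2)) := by nlinarith
  have hexp : Real.exp (-t ^ 2 / (2 * σ ^ 2)) = (Real.exp (t ^ 2 / (2 * σ ^ 2)))⁻¹ := by
    rw [← Real.exp_neg]; ring_nf
  rw [hexp]
  rw [inv_mul_le_iff₀ (Real.exp_pos _)]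
  linarith [key]

lemma gauss_continuous (hσ : 0 < σ) : Continuous (gaussDensity d σ) := by
  unfold gaussDensity
  exact continuous_const.mul ((continuous_norm.pow 2).neg.div_const _).rexp

lemma hasFDerivAt_gauss (hσ : 0 < σ) (u : EuclideanSpace ℝ (Fin d)) :
    HasFDerivAt (gaussDensity d σ)
      ((-(gaussDensity d σ u) / σ ^ 2) • innerSL ℝ u) u := by
  have hn : HasFDerivAt (fun v : EuclideanSpace ℝ (Fin d) => ‖v‖ ^ 2)
      (2 • innerSL ℝ u) u := (hasStrictFDerivAt_norm_sq u).hasFDerivAt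
  have hf : HasFDerivAt (fun v : EuclideanSpace ℝ (Fin d) => -‖v‖ ^ 2 / (2 * σ ^ 2))
      ((-(2 * σ ^ 2)⁻¹) • (2 • innerSL ℝ u)) u := by
    have heq : ∀ v : EuclideanSpace ℝ (Fin d),
        -‖v‖ ^ 2 / (2 * σ ^ 2) = (-(2 * σ ^ 2)⁻¹) * ‖v‖ ^ 2 := fun v => by ring
    simp only [heq]
    exact hn.const_mul _
  have hexp := hf.exp
  have := hexp.const_mul ((2 * π * σ ^ 2) ^ (-(d : ℝ) / 2))
  refine this.congr_fderiv ?_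
  ext v
  unfold gaussDensity
  simp only [ContinuousLinearMap.coe_smul', Pi.smul_apply, smul_eq_mul,
    ContinuousLinearMap.coe_comp', Function.comp_apply]
  have hσ2 : σ^2 ≠ 0 := by positivity
  field_simp
  ring

lemma integrable_of_bound {Y F : Type*} [MeasurableSpace Y] [NormedAddCommGroup F]
    (μ : Measure Y) [IsProbabilityMeasure μ] (f : Y → F) (hf : AEStronglyMeasurable f μ)
    (C : ℝ) (h : ∀ y, ‖f y‖ ≤ C) : Integrable f μ :=
  (integrable_const C).mono' hf (ae_of_all _ h)

-- gradient identity
lemma grad_log_gauss_integral (d : ℕ) (α σ : ℝ) (hα : 0 < α) (hσ : 0 < σ)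
    (μ : Measure (EuclideanSpace ℝ (Fin d))) [IsProbabilityMeasure μ]
    (x : EuclideanSpace ℝ (Fin d))
    (hp : 0 < ∫ y, gaussDensity d σ (x - α • y) ∂μ) :
    gradient (fun x' => Real.log (∫ y, gaussDensity d σ (x' - α • y) ∂μ)) x
      = (1 / σ ^ 2) • (-x + α •
          ((∫ y, gaussDensity d σ (x - α • y) ∂μ)⁻¹ •
            ∫ y, gaussDensity d σ (x - α • y) • y ∂μ)) := by
  classical
  set B : ℝ := (2 * π * σ ^ 2) ^ (-(d : ℝ) / 2) with hB
  have hB0 : 0 < B := by rw [hB]; positivity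
  have hσ2 : (0:ℝ) < σ ^ 2 := by positivity
  -- continuity of y ↦ x' - α • y and of gaussian
  have hcont : ∀ x' : EuclideanSpace ℝ (Fin d), Continuous fun y : EuclideanSpace ℝ (Fin d) => gaussDensity d σ (x' - α • y) :=
    fun x' => (gauss_continuous hσ).comp (continuous_const.sub (continuous_id.const_smul α))
  set p : ℝ := ∫ y, gaussDensity d σ (x - α • y) ∂μ with hpdef
  set v : EuclideanSpace ℝ (Fin d) := ∫ y, gaussDensity d σ (x - α • y) • y ∂μ with hvdef
  -- derivative of the integral
  set F' : EuclideanSpace ℝ (Fin d) → EuclideanSpace ℝ (Fin d) → (EuclideanSpace ℝ (Fin d) →L[ℝ] ℝ) := fun x' y =>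
    (-(gaussDensity d σ (x' - α • y)) / σ ^ 2) • innerSL ℝ (x' - α • y) with hF'
  have hdiff : ∀ (y : EuclideanSpace ℝ (Fin d)) (x' : EuclideanSpace ℝ (Fin d)),
      HasFDerivAt (fun z => gaussDensity d σ (z - α • y)) (F' x' y) x' := by
    intro y x'
    have h1 : HasFDerivAt (fun z : EuclideanSpace ℝ (Fin d) => z - α • y)
        (ContinuousLinearMap.id ℝ (EuclideanSpace ℝ (Fin d))) x' := (hasFDerivAt_id x').sub_const _
    have h2 := (hasFDerivAt_gauss hσ (x' - α • y)).comp x' h1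
    simp only [hF', ContinuousLinearMap.comp_id] at h2 ⊢
    exact h2
  have hbound : ∀ (y : EuclideanSpace ℝ (Fin d)) (x' : EuclideanSpace ℝ (Fin d)), ‖F' x' y‖ ≤ B * σ / σ ^ 2 := by
    intro y x'
    have h1 : ‖F' x' y‖ = gaussDensity d σ (x' - α • y) * ‖x' - α • y‖ / σ ^ 2 := by
      rw [hF']
      show ‖(-gaussDensity d σ (x' - α • y) / σ ^ 2) • innerSL ℝ (x' - α • y)‖ = _
      rw [norm_smul (-gaussDensity d σ (x' - α • y) / σ ^ 2) (innerSL ℝ (x' - α • y)), innerSL_apply_norm, Real.norm_eq_abs, abs_div, abs_neg,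
        abs_of_nonneg (gauss_nonneg (x' - α • y)), abs_of_nonneg hσ2.le, div_mul_eq_mul_div]
    rw [h1, hB, div_le_div_iff_of_pos_right hσ2]
    exact gauss_mul_norm_le hσ _
  have key : HasFDerivAt (fun x' : EuclideanSpace ℝ (Fin d) => ∫ y, gaussDensity d σ (x' - α • y) ∂μ)
      (∫ y, F' x y ∂μ) x := by
    apply hasFDerivAt_integral_of_dominated_of_fderiv_le (bound := fun _ => B * σ / σ ^ 2)
      (s := Metric.ball x 1) (Metric.ball_mem_nhds x one_pos)
    · exact Filter.Eventually.of_forall fun x' => (hcont x').aestronglyMeasurable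
    · exact integrable_of_bound μ _ (hcont x).aestronglyMeasurable B fun y => by
        rw [Real.norm_eq_abs, abs_of_nonneg (gauss_nonneg _), hB]; exact gauss_le hσ _
    · apply Continuous.aestronglyMeasurable
      exact ((((hcont x).neg).div_const _).smul ((innerSL ℝ).continuous.comp
        (continuous_const.sub (continuous_id.const_smul α))))
    · exact ae_of_all _ fun y x' _ => hbound y x'
    · exact integrable_const _
    · exact ae_of_all _ fun y x' _ => hdiff y x'
  -- integrability facts
  have hmeas_g : AEStronglyMeasurable (fun y => gaussDensity d σ (x - α • y)) μ :=
    (hcont x).aestronglyMeasurable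
  have hint_g : Integrable (fun y => gaussDensity d σ (x - α • y)) μ :=
    integrable_of_bound μ _ hmeas_g B fun y => by
      rw [Real.norm_eq_abs, abs_of_nonneg (gauss_nonneg _), hB]; exact gauss_le hσ _
  have hint_gy : Integrable (fun y => gaussDensity d σ (x - α • y) • y) μ := by
    refine integrable_of_bound μ _ ?_ ((B * σ + B * ‖x‖) / α) ?_
    · exact ((hcont x).smul continuous_id).aestronglyMeasurable
    · intro y
      rw [norm_smul, Real.norm_eq_abs, abs_of_nonneg (gauss_nonneg _), le_div_iff₀ hα]
      have h1 : ‖α • y‖ = α * ‖y‖ := by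
        rw [norm_smul, Real.norm_eq_abs, abs_of_pos hα]
      have h2 : α * ‖y‖ ≤ ‖x - α • y‖ + ‖x‖ := by
        rw [← h1]
        calc ‖α • y‖ = ‖x - (x - α • y)‖ := by rw [sub_sub_cancel]
        _ ≤ ‖x‖ + ‖x - α • y‖ := norm_sub_le _ _
        _ = ‖x - α • y‖ + ‖x‖ := by ring
      have h3 := gauss_mul_norm_le (d := d) hσ (x - α • y)
      have h4 := gauss_le (d := d) hσ (x - α • y)
      have h5 := gauss_nonneg (σ := σ) (x - α • y)
      rw [hB]
      have hx0 : (0:ℝ) ≤ ‖x‖ := norm_nonneg _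
      nlinarith [mul_le_mul_of_nonneg_left h2 h5]
  have hint_h : Integrable (fun y =>
      (-(gaussDensity d σ (x - α • y)) / σ ^ 2) • (x - α • y)) μ := by
    refine integrable_of_bound μ _ ?_ (B * σ / σ ^ 2) ?_
    · exact (((hcont x).neg.div_const _).smul
        (continuous_const.sub (continuous_id.const_smul α))).aestronglyMeasurable
    · intro y
      rw [norm_smul, Real.norm_eq_abs, abs_div, abs_neg,
        abs_of_nonneg (gauss_nonneg _), abs_of_nonneg hσ2.le, div_mul_eq_mul_div,
        div_le_div_iff_of_pos_right hσ2, hB]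
      exact gauss_mul_norm_le hσ _
  set G : EuclideanSpace ℝ (Fin d) :=
    ∫ y, (-(gaussDensity d σ (x - α • y)) / σ ^ 2) • (x - α • y) ∂μ with hGdef
  -- the fderiv integral equals toDual of G
  have htoDual : (∫ y, F' x y ∂μ) = InnerProductSpace.toDual ℝ (EuclideanSpace ℝ (Fin d)) G := by
    have hcomm := (innerSL ℝ (E := EuclideanSpace ℝ (Fin d))).integral_comp_comm hint_h
    have hTD : InnerProductSpace.toDual ℝ (EuclideanSpace ℝ (Fin d)) G = innerSL ℝ G := by
      ext w; simp [InnerProductSpace.toDual_apply_apply]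
    rw [hTD, hGdef, ← hcomm]
    apply integral_congr_ae
    apply ae_of_all
    intro y
    rw [hF']
    exact ((innerSL ℝ).map_smul _ _).symm
  have hGrad : HasGradientAt
      (fun x' : EuclideanSpace ℝ (Fin d) => ∫ y, gaussDensity d σ (x' - α • y) ∂μ) G x := by
    rw [hasGradientAt_iff_hasFDerivAt, ← htoDual]
    exact key
  have hlogGrad : HasGradientAt
      (fun x' : EuclideanSpace ℝ (Fin d) => Real.log (∫ y, gaussDensity d σ (x' - α • y) ∂μ))
      (p⁻¹ • G) x := by
    rw [hasGradientAt_iff_hasFDerivAt]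
    have hld : HasDerivAt Real.log p⁻¹
        ((fun x' : EuclideanSpace ℝ (Fin d) => ∫ y, gaussDensity d σ (x' - α • y) ∂μ) x) := by
      rw [← hpdef] at *
      exact Real.hasDerivAt_log hp.ne'
    have hcomp := hld.comp_hasFDerivAt x hGrad.hasFDerivAt
    have hsm : InnerProductSpace.toDual ℝ (EuclideanSpace ℝ (Fin d)) (p⁻¹ • G)
        = p⁻¹ • InnerProductSpace.toDual ℝ (EuclideanSpace ℝ (Fin d)) G := by
      ext w
      simp [InnerProductSpace.toDual_apply_apply, inner_smul_left]
    rw [hsm]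
    exact hcomp
  -- compute G
  have hGval : G = (1 / σ ^ 2) • ((-p) • x + α • v) := by
    rw [hGdef]
    have hpt : ∀ y : EuclideanSpace ℝ (Fin d),
        (-(gaussDensity d σ (x - α • y)) / σ ^ 2) • (x - α • y)
          = (1 / σ ^ 2) • ((-(gaussDensity d σ (x - α • y))) • x
              + α • (gaussDensity d σ (x - α • y) • y)) := by
      intro y
      module
    rw [integral_congr_ae (ae_of_all _ hpt), integral_smul]
    congr 1
    have h1 : Integrable (fun y => (-gaussDensity d σ (x - α • y)) • x) μ :=
      (hint_g.neg).smul_const x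
    have h2 : Integrable (fun y => α • (gaussDensity d σ (x - α • y) • y)) μ :=
      hint_gy.smul α
    rw [integral_add h1 h2, integral_smul, integral_smul_const, ← hvdef]
    congr 1
    rw [integral_neg, ← hpdef, neg_smul]
  have hfinal : p⁻¹ • G = (1 / σ ^ 2) • (-x + α • (p⁻¹ • v)) := by
    rw [hGval]
    match_scalars
    · field_simp
    · field_simp
  rw [hlogGrad.gradient, hfinal, hpdef, hvdef]


/-- for i.i.d. samples `X₁, X₂, …` from `μ` and `0 < ε < E[φ_σ(x − α X₁)]`, the
thresholded ratio estimator
`(1/σ²)(−x + α (∑_{i=1}^m φ_σ(x − α Xᵢ) Xᵢ) / max(∑_{i=1}^m φ_σ(x − α Xᵢ), m ε))`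
converges almost surely, as `m → ∞`, to the score `∇ log p(x)` of
`p(x) = ∫ φ_σ(x − α y) dμ(y)`. -/
theorem stmt_5 (d : ℕ) (α σ : ℝ) (hα : 0 < α) (hσ : 0 < σ)
    (μ : Measure (EuclideanSpace ℝ (Fin d))) [IsProbabilityMeasure μ]
    {Ω : Type*} [MeasurableSpace Ω] (P : Measure Ω) [IsProbabilityMeasure P]
    (X : ℕ → Ω → EuclideanSpace ℝ (Fin d)) (hXmeas : ∀ i, Measurable (X i))
    (hindep : iIndepFun X P)
    (hlaw : ∀ i, Measure.map (X i) P = μ)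
    (x : EuclideanSpace ℝ (Fin d)) (ε : ℝ) (hε : 0 < ε)
    (hεlt : ε < ∫ y, gaussDensity d σ (x - α • y) ∂μ) :
    ∀ᵐ ω ∂P, Filter.Tendsto
      (fun m : ℕ =>
        (1 / σ ^ 2) • (-x + α •
          ((max (∑ i ∈ Finset.range m, gaussDensity d σ (x - α • X i ω)) ((m : ℝ) * ε))⁻¹ •
            ∑ i ∈ Finset.range m, gaussDensity d σ (x - α • X i ω) • X i ω)))
      Filter.atTop
      (nhds (gradient (fun x' => Real.log (∫ y, gaussDensity d σ (x' - α • y) ∂μ)) x)) := by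
  
  classical
  have hσ2 : (0:ℝ) < σ ^ 2 := by positivity
  set B : ℝ := (2 * π * σ ^ 2) ^ (-(d : ℝ) / 2) with hB
  have hp : (0:ℝ) < ∫ y, gaussDensity d σ (x - α • y) ∂μ := hε.trans hεlt
  rw [grad_log_gauss_integral d α σ hα hσ μ x hp]
  -- notation
  have hgc : Continuous (fun y : EuclideanSpace ℝ (Fin d) => gaussDensity d σ (x - α • y)) :=
    (gauss_continuous hσ).comp (continuous_const.sub (continuous_id.const_smul α))
  have hgm : Measurable (fun y : EuclideanSpace ℝ (Fin d) => gaussDensity d σ (x - α • y)) :=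
    hgc.measurable
  have hG2c : Continuous (fun y : EuclideanSpace ℝ (Fin d) =>
      gaussDensity d σ (x - α • y) • y) := hgc.smul continuous_id
  have hG2m : Measurable (fun y : EuclideanSpace ℝ (Fin d) =>
      gaussDensity d σ (x - α • y) • y) := hG2c.measurable
  have identX : ∀ i, IdentDistrib (X i) (X 0) P P := fun i =>
    ⟨(hXmeas i).aemeasurable, (hXmeas 0).aemeasurable, by rw [hlaw i, hlaw 0]⟩
  -- integrability over μ
  have hint_gμ : Integrable (fun y => gaussDensity d σ (x - α • y)) μ :=
    integrable_of_bound μ _ hgc.aestronglyMeasurable B fun y => by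
      rw [Real.norm_eq_abs, abs_of_nonneg (gauss_nonneg _), hB]; exact gauss_le hσ _
  have hint_G2μ : Integrable (fun y => gaussDensity d σ (x - α • y) • y) μ := by
    refine integrable_of_bound μ _ hG2c.aestronglyMeasurable ((B * σ + B * ‖x‖) / α) ?_
    intro y
    rw [norm_smul, Real.norm_eq_abs, abs_of_nonneg (gauss_nonneg _), le_div_iff₀ hα]
    have h2 : α * ‖y‖ ≤ ‖x - α • y‖ + ‖x‖ := by
      rw [show α * ‖y‖ = ‖α • y‖ by rw [norm_smul, Real.norm_eq_abs, abs_of_pos hα]]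
      calc ‖α • y‖ = ‖x - (x - α • y)‖ := by rw [sub_sub_cancel]
      _ ≤ ‖x‖ + ‖x - α • y‖ := norm_sub_le _ _
      _ = ‖x - α • y‖ + ‖x‖ := by ring
    have h3 := gauss_mul_norm_le (d := d) hσ (x - α • y)
    have h4 := gauss_le (d := d) hσ (x - α • y)
    have h5 := gauss_nonneg (σ := σ) (x - α • y)
    have hx0 : (0:ℝ) ≤ ‖x‖ := norm_nonneg _
    rw [hB]
    nlinarith [mul_le_mul_of_nonneg_left h2 h5]
  -- integrability over P
  have hZint : Integrable (fun ω => gaussDensity d σ (x - α • X 0 ω)) P := by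
    have h := integrable_map_measure (μ := P) (f := X 0)
      (hgc.aestronglyMeasurable (μ := Measure.map (X 0) P)) (hXmeas 0).aemeasurable
    rw [hlaw 0] at h
    exact h.mp hint_gμ
  have hWint : Integrable (fun ω => gaussDensity d σ (x - α • X 0 ω) • X 0 ω) P := by
    have h := integrable_map_measure (μ := P) (f := X 0)
      (hG2c.aestronglyMeasurable (μ := Measure.map (X 0) P)) (hXmeas 0).aemeasurable
    rw [hlaw 0] at h
    exact h.mp hint_G2μ
  -- strong laws
  have hSLLN1 := strong_law_ae (μ := P)
    (fun i ω => gaussDensity d σ (x - α • X i ω)) hZint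
    (fun i j hij => (hindep.indepFun hij).comp hgm hgm)
    (fun i => (identX i).comp hgm)
  have hSLLN2 := strong_law_ae (μ := P)
    (fun i ω => gaussDensity d σ (x - α • X i ω) • X i ω) hWint
    (fun i j hij => (hindep.indepFun hij).comp hG2m hG2m)
    (fun i => (identX i).comp hG2m)
  -- identify the limits
  have hlim1 : (∫ ω, gaussDensity d σ (x - α • X 0 ω) ∂P)
      = ∫ y, gaussDensity d σ (x - α • y) ∂μ := by
    rw [← hlaw 0, integral_map (hXmeas 0).aemeasurable hgc.aestronglyMeasurable]
  have hlim2 : (∫ ω, gaussDensity d σ (x - α • X 0 ω) • X 0 ω ∂P)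
      = ∫ y, gaussDensity d σ (x - α • y) • y ∂μ := by
    rw [← hlaw 0, integral_map (hXmeas 0).aemeasurable hG2c.aestronglyMeasurable]
  rw [hlim1] at hSLLN1
  rw [hlim2] at hSLLN2
  filter_upwards [hSLLN1, hSLLN2] with ω h1 h2
  set p : ℝ := ∫ y, gaussDensity d σ (x - α • y) ∂μ with hpdef
  set v : EuclideanSpace ℝ (Fin d) := ∫ y, gaussDensity d σ (x - α • y) • y ∂μ with hvdef
  set S : ℕ → ℝ := fun m => ∑ i ∈ Finset.range m, gaussDensity d σ (x - α • X i ω) with hS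
  set V : ℕ → EuclideanSpace ℝ (Fin d) :=
    fun m => ∑ i ∈ Finset.range m, gaussDensity d σ (x - α • X i ω) • X i ω with hV
  have h1' : Tendsto (fun n : ℕ => (n:ℝ)⁻¹ • S n) atTop (𝓝 p) := h1
  have h2' : Tendsto (fun n : ℕ => (n:ℝ)⁻¹ • V n) atTop (𝓝 v) := h2
  have hmax : Tendsto (fun n : ℕ => max ((n:ℝ)⁻¹ • S n) ε) atTop (𝓝 p) := by
    have := h1'.max (tendsto_const_nhds (α := ℕ) (x := ε))
    rwa [max_eq_left hεlt.le] at this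
  have hinv : Tendsto (fun n : ℕ => (max ((n:ℝ)⁻¹ • S n) ε)⁻¹) atTop (𝓝 p⁻¹) :=
    hmax.inv₀ hp.ne'
  have hratio : Tendsto (fun n : ℕ => (max ((n:ℝ)⁻¹ • S n) ε)⁻¹ • ((n:ℝ)⁻¹ • V n))
      atTop (𝓝 (p⁻¹ • v)) := hinv.smul h2'
  have hfinal0 : Tendsto (fun m : ℕ => (1/σ^2) •
      (-x + α • ((max ((m:ℝ)⁻¹ • S m) ε)⁻¹ • ((m:ℝ)⁻¹ • V m)))) atTop
      (𝓝 ((1/σ^2) • (-x + α • (p⁻¹ • v)))) :=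
    (tendsto_const_nhds.add (hratio.const_smul α)).const_smul (1/σ^2)
  refine hfinal0.congr' ?_
  filter_upwards [eventually_ge_atTop 1] with m hm
  have hm0 : (0:ℝ) < m := by exact_mod_cast hm
  have hcore : (max ((m:ℝ)⁻¹ • S m) ε)⁻¹ • ((m:ℝ)⁻¹ • V m)
      = (max (S m) ((m:ℝ) * ε))⁻¹ • V m := by
    have hmm : max (S m) ((m:ℝ) * ε) = (m:ℝ) * max ((m:ℝ)⁻¹ • S m) ε := by
      rw [mul_max_of_nonneg _ _ hm0.le, smul_eq_mul, ← mul_assoc,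
        mul_inv_cancel₀ hm0.ne', one_mul]
    rw [hmm, mul_inv, smul_smul, mul_comm, mul_smul, smul_smul]
  rw [hcore]
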